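/- Suppose f : ℝ² → ℝ has locally bounded two-dimensional variation and is left continuous on the quarter space {(s,x) : s ≥ t, x ≥ a}. Define f_i(s,x) = lim_{t'↑s, y↑x} f̃_i(t',y) where f̃₁ = (V_f + f)/2 and f̃₂ = (V_f − f)/2 (variation measured from the corner (t,a)). Then f₁ and f₂ are monotonically increasing in the two-dimensional sense, left continuous, and f(s,x) = f₁(s,x) − f₂(s,x) for all (s,x) in the interior of the quarter space. -/

import Mathlib

open MeasureTheory Set Filter Topology Real

/-- Mixed second-order increment of a two-variable function over a rectangle. -/
noncomputable def mixedInc (f : ℝ → ℝ → ℝ) (s₁ s₂ x₁ x₂ : ℝ) : ℝ :=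
  f s₂ x₂ - f s₂ x₁ - f s₁ x₂ + f s₁ x₁

/-- Two-dimensional variation of `f` on the rectangle `[t,s] × [a,x]`:
supremum over grid partitions of sums of absolute mixed second-order increments. -/
noncomputable def var2 (f : ℝ → ℝ → ℝ) (t s a x : ℝ) : ENNReal :=
  ⨆ m : ℕ, ⨆ n : ℕ, ⨆ σ : Fin (m+1) → ℝ, ⨆ τ : Fin (n+1) → ℝ,
    ⨆ _ : StrictMono σ ∧ StrictMono τ ∧ σ 0 = t ∧ σ (Fin.last m) = s ∧
      τ 0 = a ∧ τ (Fin.last n) = x,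
    ∑ i : Fin m, ∑ j : Fin n,
      ENNReal.ofReal |mixedInc f (σ i.castSucc) (σ i.succ) (τ j.castSucc) (τ j.succ)|

/-- One-dimensional total variation of `g` on `[a,b]`. -/
noncomputable def var1 (g : ℝ → ℝ) (a b : ℝ) : ENNReal :=
  ⨆ n : ℕ, ⨆ τ : Fin (n+1) → ℝ,
    ⨆ _ : StrictMono τ ∧ τ 0 = a ∧ τ (Fin.last n) = b,
    ∑ j : Fin n, ENNReal.ofReal |g (τ j.succ) - g (τ j.castSucc)|

/-- `f` is monotonically increasing in the two-dimensional sense. -/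
def Inc2 (f : ℝ → ℝ → ℝ) : Prop :=
  ∀ s₁ s₂ x₁ x₂ : ℝ, s₁ ≤ s₂ → x₁ ≤ x₂ → 0 ≤ mixedInc f s₁ s₂ x₁ x₂

/-- Joint left continuity of a two-variable function at `(s,x)`:
continuity along monotone approach from below in both variables. -/
def LeftCont2At (f : ℝ → ℝ → ℝ) (s x : ℝ) : Prop :=
  ∀ u v : ℕ → ℝ, Monotone u → Monotone v → (∀ k, u k ≤ s) → (∀ k, v k ≤ x) →
    Tendsto u atTop (𝓝 s) → Tendsto v atTop (𝓝 x) →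
    Tendsto (fun k => f (u k) (v k)) atTop (𝓝 (f s x))

/-- `g` has left derivative `d` at `x`. -/
def HasLeftDeriv (g : ℝ → ℝ) (x d : ℝ) : Prop :=
  Tendsto (fun h => (g x - g (x - h)) / h) (𝓝[>] (0:ℝ)) (𝓝 d)

namespace JD

/-- Sum of `F` over adjacent pairs of a list. -/
noncomputable def chainSum (F : ℝ → ℝ → ENNReal) : List ℝ → ENNReal
  | a :: b :: l => F a b + chainSum F (b :: l)
  | _ => 0

@[simp] lemma chainSum_nil (F : ℝ → ℝ → ENNReal) : chainSum F [] = 0 := rfl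
@[simp] lemma chainSum_single (F : ℝ → ℝ → ENNReal) (a : ℝ) : chainSum F [a] = 0 := rfl
@[simp] lemma chainSum_cons_cons (F : ℝ → ℝ → ENNReal) (a b : ℝ) (l : List ℝ) :
    chainSum F (a :: b :: l) = F a b + chainSum F (b :: l) := rfl

lemma chainSum_mono {F G : ℝ → ℝ → ENNReal} (h : ∀ a b, F a b ≤ G a b) :
    ∀ l, chainSum F l ≤ chainSum G l := by
  intro l
  induction l with
  | nil => simp
  | cons a l ih =>
    cases l with
    | nil => simp
    | cons b l => simpa using add_le_add (h a b) ih

lemma chainSum_add (F G : ℝ → ℝ → ENNReal) :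
    ∀ l, chainSum (fun a b => F a b + G a b) l = chainSum F l + chainSum G l := by
  intro l
  induction l with
  | nil => simp
  | cons a l ih =>
    cases l with
    | nil => simp
    | cons b l =>
      simp only [chainSum_cons_cons, ih]
      ring

lemma chainSum_split (F : ℝ → ℝ → ENNReal) :
    ∀ (l₁ : List ℝ) (c : ℝ) (l₂ : List ℝ),
      chainSum F (l₁ ++ c :: l₂) = chainSum F (l₁ ++ [c]) + chainSum F (c :: l₂) := by
  intro l₁
  induction l₁ with
  | nil => simp
  | cons a l₁ ih =>
    intro c l₂
    cases l₁ with
    | nil => simp [chainSum]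
    | cons b l₁ =>
      simp only [List.cons_append] at ih ⊢
      simp only [chainSum_cons_cons]
      rw [ih c l₂]
      ring

/-- Appending a point at the end only increases a chain sum. -/
lemma chainSum_le_concat (F : ℝ → ℝ → ENNReal) (c : ℝ) :
    ∀ l, chainSum F l ≤ chainSum F (l ++ [c]) := by
  intro l
  induction l with
  | nil => simp
  | cons a l ih =>
    cases l with
    | nil => simp
    | cons b l =>
      simpa using add_le_add le_rfl ih

/-- Subadditivity of `F` along insertion of intermediate points. -/
def Subadd (F : ℝ → ℝ → ENNReal) : Prop := ∀ a b c, F a c ≤ F a b + F b c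

lemma chainSum_le_orderedInsert {F : ℝ → ℝ → ENNReal} (hF : Subadd F) (c : ℝ) :
    ∀ l : List ℝ, chainSum F l ≤ chainSum F (l.orderedInsert (· ≤ ·) c) ∧
      ∀ b, chainSum F (b :: l) ≤ chainSum F (b :: l.orderedInsert (· ≤ ·) c) := by
  intro l
  induction l with
  | nil =>
    constructor
    · simp [List.orderedInsert]
    · intro b; simp [List.orderedInsert]
  | cons d l ih =>
    constructor
    · by_cases h : c ≤ d
      · simp only [List.orderedInsert, if_pos h]
        cases l with
        | nil => simp
        | cons e l => simp only [chainSum_cons_cons]; exact self_le_add_left _ _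
      · simp only [List.orderedInsert, if_neg h]
        exact ih.2 d
    · intro b
      by_cases h : c ≤ d
      · simp only [List.orderedInsert, if_pos h, chainSum_cons_cons]
        calc F b d + chainSum F (d :: l) ≤ (F b c + F c d) + chainSum F (d :: l) :=
              add_le_add (hF b c d) le_rfl
          _ = F b c + (F c d + chainSum F (d :: l)) := by ring
      · simp only [List.orderedInsert, if_neg h, chainSum_cons_cons]
        exact add_le_add le_rfl (ih.2 d)

/-- Merge a list of extra points into `l`, skipping duplicates. -/
noncomputable def minsert (c : ℝ) (l : List ℝ) : List ℝ :=
  if c ∈ l then l else l.orderedInsert (· ≤ ·) c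

noncomputable def mergeL (l e : List ℝ) : List ℝ := e.foldr minsert l

@[simp] lemma mem_minsert {x c : ℝ} {l : List ℝ} : x ∈ minsert c l ↔ x = c ∨ x ∈ l := by
  unfold minsert
  split
  · next h => constructor
              · intro hx; exact Or.inr hx
              · rintro (rfl | hx); exacts [h, hx]
  · exact List.mem_orderedInsert _

lemma mem_mergeL {x : ℝ} {l e : List ℝ} : x ∈ mergeL l e ↔ x ∈ l ∨ x ∈ e := by
  induction e with
  | nil => simp [mergeL]
  | cons c e ih =>
    simp only [mergeL, List.foldr_cons, mem_minsert]
    rw [show e.foldr minsert l = mergeL l e from rfl, ih]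
    simp [or_comm, or_assoc, or_left_comm]

lemma sorted_orderedInsert_of_not_mem {c : ℝ} :
    ∀ {l : List ℝ}, l.Pairwise (· < ·) → c ∉ l → (l.orderedInsert (· ≤ ·) c).Pairwise (· < ·) := by
  intro l
  induction l with
  | nil => intro _ _; simp [List.orderedInsert]
  | cons b l ih =>
    intro hs hc
    rw [List.pairwise_cons] at hs
    by_cases h : c ≤ b
    · simp only [List.orderedInsert, if_pos h]
      rw [List.pairwise_cons]
      have hcb : c < b := lt_of_le_of_ne h (fun he => hc (he ▸ List.mem_cons_self (a := b) (l := l)))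
      refine ⟨?_, List.pairwise_cons.2 hs⟩
      intro x hx
      rcases List.mem_cons.1 hx with rfl | hx
      · exact hcb
      · exact hcb.trans (hs.1 x hx)
    · simp only [List.orderedInsert, if_neg h]
      rw [List.pairwise_cons]
      refine ⟨?_, ih hs.2 (fun hcl => hc (List.mem_cons_of_mem _ hcl))⟩
      intro x hx
      rcases (List.mem_orderedInsert _).1 hx with rfl | hx
      · exact lt_of_not_ge h
      · exact hs.1 x hx

lemma sorted_minsert {c : ℝ} {l : List ℝ} (hs : l.Pairwise (· < ·)) :
    (minsert c l).Pairwise (· < ·) := by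
  unfold minsert; split
  · exact hs
  · exact sorted_orderedInsert_of_not_mem hs (by assumption)

lemma sorted_mergeL {l e : List ℝ} (hs : l.Pairwise (· < ·)) : (mergeL l e).Pairwise (· < ·) := by
  induction e with
  | nil => exact hs
  | cons c e ih => exact sorted_minsert ih

lemma chainSum_le_minsert {F : ℝ → ℝ → ENNReal} (hF : Subadd F) (c : ℝ) (l : List ℝ) :
    chainSum F l ≤ chainSum F (minsert c l) := by
  unfold minsert; split
  · exact le_rfl
  · exact (chainSum_le_orderedInsert hF c l).1

lemma chainSum_le_mergeL {F : ℝ → ℝ → ENNReal} (hF : Subadd F) (l e : List ℝ) :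
    chainSum F l ≤ chainSum F (mergeL l e) := by
  induction e with
  | nil => exact le_rfl
  | cons c e ih => exact ih.trans (chainSum_le_minsert hF c (mergeL l e))

/-- Two strictly sorted lists with the same members are equal. -/
lemma sorted_ext {l l' : List ℝ} (hl : l.Pairwise (· < ·)) (hl' : l'.Pairwise (· < ·))
    (h : ∀ x, x ∈ l ↔ x ∈ l') : l = l' := by
  haveI : Std.Antisymm (α := ℝ) (· < ·) := ⟨fun a b h h' => absurd h' (asymm h)⟩
  refine List.Perm.eq_of_pairwise' hl hl' ?_
  refine List.perm_of_nodup_nodup_toFinset_eq hl.nodup hl'.nodup ?_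
  ext x
  simp [List.mem_toFinset, h]

/-- Refinement: chain sums only grow when passing to a sorted superset. -/
lemma chainSum_le_of_subset {F : ℝ → ℝ → ENNReal} (hF : Subadd F) {l l' : List ℝ}
    (hl : l.Pairwise (· < ·)) (hl' : l'.Pairwise (· < ·)) (hsub : ∀ x ∈ l, x ∈ l') :
    chainSum F l ≤ chainSum F l' := by
  have : mergeL l l' = l' := by
    refine sorted_ext (sorted_mergeL hl) hl' ?_
    intro x
    rw [mem_mergeL]
    exact ⟨fun h => h.elim (hsub x) id, fun h => Or.inr h⟩
  calc chainSum F l ≤ chainSum F (mergeL l l') := chainSum_le_mergeL hF l l'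
    _ = chainSum F l' := by rw [this]

lemma head_le_of_sorted {l : List ℝ} (hs : l.Pairwise (· ≤ ·)) {x : ℝ} (hx : x ∈ l)
    (h : l ≠ []) : l.head h ≤ x := by
  cases l with
  | nil => simp at hx
  | cons a l =>
    rcases List.mem_cons.1 hx with rfl | hx
    · simp
    · simpa using (List.pairwise_cons.1 hs).1 x hx

lemma le_getLast_of_sorted : ∀ {l : List ℝ}, l.Pairwise (· ≤ ·) → ∀ {x : ℝ}, x ∈ l →
    ∀ (h : l ≠ []), x ≤ l.getLast h := by
  intro l
  induction l with
  | nil => intro _ x hx; simp at hx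
  | cons a l ih =>
    intro hs x hx h
    cases l with
    | nil => simp at hx; simp [hx]
    | cons b l =>
      rw [List.getLast_cons (by simp)]
      rcases List.mem_cons.1 hx with rfl | hx
      · exact le_trans ((List.pairwise_cons.1 hs).1 _ (List.getLast_mem _))
          le_rfl
      · exact ih (List.pairwise_cons.1 hs).2 hx (by simp)

end JD

namespace JD

lemma abs_mixedInc_split_left (f : ℝ → ℝ → ℝ) (p q r u v : ℝ) :
    |mixedInc f p r u v| ≤ |mixedInc f p q u v| + |mixedInc f q r u v| := by
  have : mixedInc f p r u v = mixedInc f p q u v + mixedInc f q r u v := by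
    unfold mixedInc; ring
  rw [this]; exact abs_add_le _ _

lemma abs_mixedInc_split_right (f : ℝ → ℝ → ℝ) (p q u v w : ℝ) :
    |mixedInc f p q u w| ≤ |mixedInc f p q u v| + |mixedInc f p q v w| := by
  have : mixedInc f p q u w = mixedInc f p q u v + mixedInc f p q v w := by
    unfold mixedInc; ring
  rw [this]; exact abs_add_le _ _

/-- Inner summand. -/
noncomputable def inF (f : ℝ → ℝ → ℝ) (p q : ℝ) : ℝ → ℝ → ENNReal :=
  fun u v => ENNReal.ofReal |mixedInc f p q u v|

lemma subadd_inF (f : ℝ → ℝ → ℝ) (p q : ℝ) : Subadd (inF f p q) := by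
  intro u v w
  unfold inF
  rw [← ENNReal.ofReal_add (abs_nonneg _) (abs_nonneg _)]
  exact ENNReal.ofReal_le_ofReal (abs_mixedInc_split_right f p q u v w)

/-- Grid sum of `f` over the grid `σ × τ`. -/
noncomputable def gsum (f : ℝ → ℝ → ℝ) (σ τ : List ℝ) : ENNReal :=
  chainSum (fun p q => chainSum (inF f p q) τ) σ

lemma subadd_outF (f : ℝ → ℝ → ℝ) (τ : List ℝ) :
    Subadd (fun p q => chainSum (inF f p q) τ) := by
  intro p q r
  calc chainSum (inF f p r) τ
      ≤ chainSum (fun u v => inF f p q u v + inF f q r u v) τ := by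
        refine chainSum_mono (fun u v => ?_) τ
        unfold inF
        rw [← ENNReal.ofReal_add (abs_nonneg _) (abs_nonneg _)]
        exact ENNReal.ofReal_le_ofReal (abs_mixedInc_split_left f p q r u v)
    _ = chainSum (inF f p q) τ + chainSum (inF f q r) τ := chainSum_add _ _ _

lemma gsum_mono_subset (f : ℝ → ℝ → ℝ) {σ σ' τ τ' : List ℝ}
    (hσ : σ.Pairwise (· < ·)) (hσ' : σ'.Pairwise (· < ·))
    (hτ : τ.Pairwise (· < ·)) (hτ' : τ'.Pairwise (· < ·))
    (hsσ : ∀ y ∈ σ, y ∈ σ') (hsτ : ∀ y ∈ τ, y ∈ τ') :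
    gsum f σ τ ≤ gsum f σ' τ' := by
  unfold gsum
  calc chainSum (fun p q => chainSum (inF f p q) τ) σ
      ≤ chainSum (fun p q => chainSum (inF f p q) τ) σ' :=
        chainSum_le_of_subset (subadd_outF f τ) hσ hσ' hsσ
    _ ≤ chainSum (fun p q => chainSum (inF f p q) τ') σ' :=
        chainSum_mono (fun p q => chainSum_le_of_subset (subadd_inF f p q) hτ hτ' hsτ) σ'

lemma gsum_split_left (f : ℝ → ℝ → ℝ) (A : List ℝ) (c : ℝ) (B τ : List ℝ) :
    gsum f (A ++ c :: B) τ = gsum f (A ++ [c]) τ + gsum f (c :: B) τ :=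
  chainSum_split _ A c B

lemma gsum_split_right (f : ℝ → ℝ → ℝ) (σ C : List ℝ) (c : ℝ) (D : List ℝ) :
    gsum f σ (C ++ c :: D) = gsum f σ (C ++ [c]) + gsum f σ (c :: D) := by
  unfold gsum
  have : ∀ p q, chainSum (inF f p q) (C ++ c :: D)
      = chainSum (inF f p q) (C ++ [c]) + chainSum (inF f p q) (c :: D) :=
    fun p q => chainSum_split _ C c D
  calc chainSum (fun p q => chainSum (inF f p q) (C ++ c :: D)) σ
      = chainSum (fun p q => chainSum (inF f p q) (C ++ [c]) + chainSum (inF f p q) (c :: D)) σ := by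
        congr 1; funext p q; exact this p q
    _ = _ := chainSum_add _ _ _

@[simp] lemma gsum_pair (f : ℝ → ℝ → ℝ) (p q u v : ℝ) :
    gsum f [p, q] [u, v] = ENNReal.ofReal |mixedInc f p q u v| := by
  simp [gsum, chainSum, inF]

/-- Admissible partition lists of `[t,s]`. -/
def Adm (t s : ℝ) (l : List ℝ) : Prop :=
  l.Pairwise (· < ·) ∧ l.head? = some t ∧ l.getLast? = some s

lemma Adm.ne_nil {t s : ℝ} {l : List ℝ} (h : Adm t s l) : l ≠ [] := by
  intro hl; rw [hl] at h; exact absurd h.2.1 (by simp)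

lemma Adm.head {t s : ℝ} {l : List ℝ} (h : Adm t s l) : l.head h.ne_nil = t := by
  have := List.head?_eq_head h.ne_nil
  rw [h.2.1] at this; exact (Option.some.inj this).symm

lemma Adm.getLast {t s : ℝ} {l : List ℝ} (h : Adm t s l) : l.getLast h.ne_nil = s := by
  have := List.getLast?_eq_getLast h.ne_nil
  rw [h.2.2] at this; exact (Option.some.inj this).symm

lemma Adm.le_of_mem {t s : ℝ} {l : List ℝ} (h : Adm t s l) {y : ℝ} (hy : y ∈ l) :
    t ≤ y ∧ y ≤ s := by
  have hs : l.Pairwise (· ≤ ·) := h.1.imp le_of_lt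
  constructor
  · have := head_le_of_sorted hs hy h.ne_nil
    rwa [h.head] at this
  · have := le_getLast_of_sorted hs hy h.ne_nil
    rwa [h.getLast] at this

lemma Adm.mem_head {t s : ℝ} {l : List ℝ} (h : Adm t s l) : t ∈ l := by
  have := List.head_mem h.ne_nil; rwa [h.head] at this

lemma Adm.mem_getLast {t s : ℝ} {l : List ℝ} (h : Adm t s l) : s ∈ l := by
  have := List.getLast_mem h.ne_nil; rwa [h.getLast] at this

lemma Adm.le {t s : ℝ} {l : List ℝ} (h : Adm t s l) : t ≤ s :=
  (h.le_of_mem h.mem_head).2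

lemma adm_single (t : ℝ) : Adm t t [t] := by
  refine ⟨by simp, by simp, by simp⟩

lemma adm_pair {t s : ℝ} (h : t < s) : Adm t s [t, s] := by
  refine ⟨by simp [List.pairwise_cons, h], by simp, by simp⟩

lemma adm_exists {t s : ℝ} (h : t ≤ s) : ∃ l, Adm t s l := by
  rcases eq_or_lt_of_le h with rfl | h
  · exact ⟨[t], adm_single t⟩
  · exact ⟨[t, s], adm_pair h⟩

end JD

namespace JD

lemma sum_eq_chainSum (G : ℝ → ℝ → ENNReal) : ∀ (m : ℕ) (σ : Fin (m+1) → ℝ),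
    ∑ i : Fin m, G (σ i.castSucc) (σ i.succ) = chainSum G (List.ofFn σ) := by
  intro m
  induction m with
  | zero => intro σ; simp [List.ofFn_succ, List.ofFn_zero]
  | succ m ih =>
    intro σ
    rw [Fin.sum_univ_succ]
    have h1 : List.ofFn σ = σ 0 :: List.ofFn (fun i : Fin (m+1) => σ i.succ) := List.ofFn_succ (f := σ)
    have h2 : List.ofFn (fun i : Fin (m+1) => σ i.succ)
        = σ 1 :: List.ofFn (fun i : Fin m => σ i.succ.succ) := by
      rw [List.ofFn_succ]
      simp [Fin.succ_zero_eq_one]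
    rw [h1, h2, chainSum_cons_cons]
    have e2 : ∑ i : Fin m, G (σ i.succ.castSucc) (σ i.succ.succ)
        = chainSum G (σ 1 :: List.ofFn fun i : Fin m => σ i.succ.succ) := by
      rw [← h2, ← ih (fun i => σ i.succ)]
      exact Finset.sum_congr rfl fun i _ => rfl
    rw [e2]
    congr 2 <;> simp

lemma ofFn_adm {m : ℕ} {σ : Fin (m+1) → ℝ} {t s : ℝ} (hm : StrictMono σ)
    (h0 : σ 0 = t) (hl : σ (Fin.last m) = s) : Adm t s (List.ofFn σ) := by
  refine ⟨List.pairwise_ofFn.2 ?_, ?_, ?_⟩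
  · intro i j h; exact hm h
  · rw [List.ofFn_succ, List.head?_cons, h0]
  · have hne : List.ofFn σ ≠ [] := by rw [List.ofFn_succ]; simp
    rw [List.getLast?_eq_getLast hne, List.getLast_ofFn]
    refine congrArg some ?_
    rw [← hl]
    exact congrArg σ (Fin.ext (by simp [Fin.last]))

lemma adm_to_fn {t s : ℝ} {l : List ℝ} (h : Adm t s l) :
    ∃ (m : ℕ) (σ : Fin (m+1) → ℝ), StrictMono σ ∧ σ 0 = t ∧ σ (Fin.last m) = s ∧
      List.ofFn σ = l := by
  obtain ⟨n, hn⟩ : ∃ n, l.length = n + 1 := by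
    have := h.ne_nil
    cases l with
    | nil => exact absurd rfl this
    | cons b l => exact ⟨l.length, rfl⟩
  refine ⟨n, fun i => l.get (Fin.cast hn.symm i), ?_, ?_, ?_, ?_⟩
  · intro i j hij
    exact List.pairwise_iff_getElem.1 h.1 _ _ _ _ hij
  · rw [← h.head]
    exact List.get_mk_zero _
  · rw [← h.getLast, List.getLast_eq_getElem]
    simp [hn, Fin.last]
  · refine List.ext_get (by simp [hn]) fun i h1 h2 => ?_
    rw [List.get_ofFn]
    rfl

lemma gsum_le_var2 (f : ℝ → ℝ → ℝ) {t s a x : ℝ} {σl τl : List ℝ}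
    (hσ : Adm t s σl) (hτ : Adm a x τl) : gsum f σl τl ≤ var2 f t s a x := by
  obtain ⟨m, σ, hσm, hσ0, hσl, hσe⟩ := adm_to_fn hσ
  obtain ⟨n, τ, hτm, hτ0, hτl, hτe⟩ := adm_to_fn hτ
  have key : (∑ i : Fin m, ∑ j : Fin n,
      ENNReal.ofReal |mixedInc f (σ i.castSucc) (σ i.succ) (τ j.castSucc) (τ j.succ)|)
      = gsum f σl τl := by
    rw [← hσe, ← hτe]
    unfold gsum
    rw [← sum_eq_chainSum (fun p q => chainSum (inF f p q) (List.ofFn τ)) m σ]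
    exact Finset.sum_congr rfl fun i _ => sum_eq_chainSum (inF f (σ i.castSucc) (σ i.succ)) n τ
  rw [← key, var2]
  exact le_iSup_of_le m <| le_iSup_of_le n <| le_iSup_of_le σ <| le_iSup_of_le τ <|
    le_iSup_of_le ⟨hσm, hτm, hσ0, hσl, hτ0, hτl⟩ le_rfl

lemma var2_le_of_forall {f : ℝ → ℝ → ℝ} {t s a x : ℝ} {B : ENNReal}
    (h : ∀ σl τl, Adm t s σl → Adm a x τl → gsum f σl τl ≤ B) : var2 f t s a x ≤ B := by
  rw [var2]
  refine iSup_le fun m => iSup_le fun n => iSup_le fun σ => iSup_le fun τ => iSup_le fun hc => ?_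
  obtain ⟨hσm, hτm, hσ0, hσl, hτ0, hτl⟩ := hc
  have key : (∑ i : Fin m, ∑ j : Fin n,
      ENNReal.ofReal |mixedInc f (σ i.castSucc) (σ i.succ) (τ j.castSucc) (τ j.succ)|)
      = gsum f (List.ofFn σ) (List.ofFn τ) := by
    unfold gsum
    rw [← sum_eq_chainSum (fun p q => chainSum (inF f p q) (List.ofFn τ)) m σ]
    exact Finset.sum_congr rfl fun i _ => sum_eq_chainSum (inF f (σ i.castSucc) (σ i.succ)) n τ
  rw [key]
  exact h _ _ (ofFn_adm hσm hσ0 hσl) (ofFn_adm hτm hτ0 hτl)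

/-- `var2` as a supremum over admissible list pairs. -/
lemma var2_eq_iSup (f : ℝ → ℝ → ℝ) (t s a x : ℝ) :
    var2 f t s a x = ⨆ p : {p : List ℝ × List ℝ // Adm t s p.1 ∧ Adm a x p.2},
      gsum f p.val.1 p.val.2 := by
  apply le_antisymm
  · exact var2_le_of_forall fun σl τl h1 h2 => le_iSup_of_le ⟨(σl, τl), h1, h2⟩ le_rfl
  · exact iSup_le fun p => gsum_le_var2 f p.2.1 p.2.2

end JD

namespace JD

lemma adm_of_sorted_mem {t s : ℝ} {l : List ℝ} (hs : l.Pairwise (· < ·)) (htl : t ∈ l)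
    (hsl : s ∈ l) (hb : ∀ y ∈ l, t ≤ y ∧ y ≤ s) : Adm t s l := by
  have hne : l ≠ [] := by intro h; subst h; simp at htl
  refine ⟨hs, ?_, ?_⟩
  · rw [List.head?_eq_head hne]
    refine congrArg some (le_antisymm ?_ ?_)
    · exact head_le_of_sorted (hs.imp le_of_lt) htl hne
    · exact (hb _ (List.head_mem hne)).1
  · rw [List.getLast?_eq_getLast hne]
    refine congrArg some (le_antisymm ?_ ?_)
    · exact (hb _ (List.getLast_mem hne)).2
    · exact le_getLast_of_sorted (hs.imp le_of_lt) hsl hne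

lemma adm_extend {t s s' : ℝ} {l : List ℝ} (h : Adm t s l) (hss : s ≤ s') :
    ∃ l', Adm t s' l' ∧ ∀ y ∈ l, y ∈ l' := by
  rcases eq_or_lt_of_le hss with rfl | hlt
  · exact ⟨l, h, fun y hy => hy⟩
  · refine ⟨l ++ [s'], ⟨?_, ?_, ?_⟩, fun y hy => by simp [hy]⟩
    · refine List.pairwise_append.2 ⟨h.1, by simp, fun y hy b hb => ?_⟩
      simp only [List.mem_singleton] at hb
      subst hb
      exact lt_of_le_of_lt (h.le_of_mem hy).2 hlt
    · cases l with
      | nil => exact absurd rfl h.ne_nil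
      | cons c l' => simpa using h.2.1
    · simp [List.getLast?_concat]

lemma var2_mono (f : ℝ → ℝ → ℝ) {t a s₁ s₂ x₁ x₂ : ℝ} (hs : s₁ ≤ s₂) (hx : x₁ ≤ x₂) :
    var2 f t s₁ a x₁ ≤ var2 f t s₂ a x₂ := by
  refine var2_le_of_forall fun σl τl h1 h2 => ?_
  obtain ⟨σl', hσ', hsub⟩ := adm_extend h1 hs
  obtain ⟨τl', hτ', hsub'⟩ := adm_extend h2 hx
  exact (gsum_mono_subset f h1.1 hσ'.1 h2.1 hτ'.1 hsub hsub').trans (gsum_le_var2 f hσ' hτ')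

lemma gsum_superadd_key (f : ℝ → ℝ → ℝ) {t a s₁ s₂ x₁ x₂ : ℝ} (ht : t ≤ s₁) (hs : s₁ < s₂)
    (ha : a ≤ x₁) (hx : x₁ < x₂) {σ τ σ' τ' : List ℝ}
    (hσ : Adm t s₂ σ) (hτ : Adm a x₁ τ) (hσ' : Adm t s₁ σ') (hτ' : Adm a x₂ τ') :
    gsum f σ τ + gsum f σ' τ' + ENNReal.ofReal |mixedInc f s₁ s₂ x₁ x₂|
      ≤ var2 f t s₂ a x₂ + var2 f t s₁ a x₁ := by
  set σ'' := mergeL σ σ' with hσ''def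
  set τ'' := mergeL τ τ' with hτ''def
  have hσ''s : σ''.Pairwise (· < ·) := sorted_mergeL hσ.1
  have hτ''s : τ''.Pairwise (· < ·) := sorted_mergeL hτ.1
  have hbσ'' : ∀ y ∈ σ'', t ≤ y ∧ y ≤ s₂ := by
    intro y hy
    rcases mem_mergeL.1 hy with h | h
    · exact hσ.le_of_mem h
    · exact ⟨(hσ'.le_of_mem h).1, le_trans (hσ'.le_of_mem h).2 hs.le⟩
  have hbτ'' : ∀ y ∈ τ'', a ≤ y ∧ y ≤ x₂ := by
    intro y hy
    rcases mem_mergeL.1 hy with h | h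
    · exact ⟨(hτ.le_of_mem h).1, le_trans (hτ.le_of_mem h).2 hx.le⟩
    · exact hτ'.le_of_mem h
  have hadmσ'' : Adm t s₂ σ'' :=
    adm_of_sorted_mem hσ''s (mem_mergeL.2 (Or.inl hσ.mem_head))
      (mem_mergeL.2 (Or.inl hσ.mem_getLast)) hbσ''
  have hadmτ'' : Adm a x₂ τ'' :=
    adm_of_sorted_mem hτ''s (mem_mergeL.2 (Or.inl hτ.mem_head))
      (mem_mergeL.2 (Or.inr hτ'.mem_getLast)) hbτ''
  -- split σ'' at s₁ and τ'' at x₁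
  have hs₁mem : s₁ ∈ σ'' := mem_mergeL.2 (Or.inr hσ'.mem_getLast)
  have hx₁mem : x₁ ∈ τ'' := mem_mergeL.2 (Or.inl hτ.mem_getLast)
  obtain ⟨A, B, hAB⟩ := List.append_of_mem hs₁mem
  obtain ⟨C, D, hCD⟩ := List.append_of_mem hx₁mem
  have hσp : List.Pairwise (· < ·) (A ++ s₁ :: B) := by rw [← hAB]; exact hσ''s
  have hτp : List.Pairwise (· < ·) (C ++ x₁ :: D) := by rw [← hCD]; exact hτ''s
  obtain ⟨hA, hs₁B, hcrossA⟩ := List.pairwise_append.1 hσp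
  obtain ⟨hC, hx₁D, hcrossC⟩ := List.pairwise_append.1 hτp
  have hBgt : ∀ y ∈ B, s₁ < y := (List.pairwise_cons.1 hs₁B).1
  have hDgt : ∀ y ∈ D, x₁ < y := (List.pairwise_cons.1 hx₁D).1
  have hAlt : ∀ y ∈ A, y < s₁ := fun y hy => hcrossA y hy s₁ (List.mem_cons_self)
  have hClt : ∀ y ∈ C, y < x₁ := fun y hy => hcrossC y hy x₁ (List.mem_cons_self)
  have hA₁s : (A ++ [s₁]).Pairwise (· < ·) := by
    refine List.pairwise_append.2 ⟨hA, by simp, fun y hy b hb => ?_⟩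
    simp only [List.mem_singleton] at hb; subst hb; exact hAlt y hy
  have hC₁s : (C ++ [x₁]).Pairwise (· < ·) := by
    refine List.pairwise_append.2 ⟨hC, by simp, fun y hy b hb => ?_⟩
    simp only [List.mem_singleton] at hb; subst hb; exact hClt y hy
  have hB₁s : (s₁ :: B).Pairwise (· < ·) := hs₁B
  have hD₁s : (x₁ :: D).Pairwise (· < ·) := hx₁D
  -- membership transfers
  have hmemA₁ : ∀ y ∈ σ'', y ≤ s₁ → y ∈ A ++ [s₁] := by
    intro y hy hyle
    rw [hAB] at hy
    rcases List.mem_append.1 hy with h | h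
    · exact List.mem_append.2 (Or.inl h)
    · rcases List.mem_cons.1 h with rfl | h
      · simp
      · exact absurd hyle (not_le.2 (hBgt y h))
  have hmemC₁ : ∀ y ∈ τ'', y ≤ x₁ → y ∈ C ++ [x₁] := by
    intro y hy hyle
    rw [hCD] at hy
    rcases List.mem_append.1 hy with h | h
    · exact List.mem_append.2 (Or.inl h)
    · rcases List.mem_cons.1 h with rfl | h
      · simp
      · exact absurd hyle (not_le.2 (hDgt y h))
  have hs₂B₁ : s₂ ∈ s₁ :: B := by
    have hy : s₂ ∈ σ'' := mem_mergeL.2 (Or.inl hσ.mem_getLast)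
    rw [hAB] at hy
    rcases List.mem_append.1 hy with h | h
    · exact absurd (hAlt _ h) (not_lt.2 hs.le)
    · exact h
  have hx₂D₁ : x₂ ∈ x₁ :: D := by
    have hy : x₂ ∈ τ'' := mem_mergeL.2 (Or.inr hτ'.mem_getLast)
    rw [hCD] at hy
    rcases List.mem_append.1 hy with h | h
    · exact absurd (hClt _ h) (not_lt.2 hx.le)
    · exact h
  -- admissibility of the corner grids
  have hadmA₁ : Adm t s₁ (A ++ [s₁]) := by
    refine adm_of_sorted_mem hA₁s ?_ (by simp) ?_
    · exact hmemA₁ t (mem_mergeL.2 (Or.inl hσ.mem_head)) ht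
    · intro y hy
      have hyσ : y ∈ σ'' := by
        rw [hAB]
        rcases List.mem_append.1 hy with h | h
        · exact List.mem_append.2 (Or.inl h)
        · simp only [List.mem_singleton] at h; subst h
          exact List.mem_append.2 (Or.inr (List.mem_cons_self))
      refine ⟨(hbσ'' y hyσ).1, ?_⟩
      rcases List.mem_append.1 hy with h | h
      · exact (hAlt y h).le
      · simp only [List.mem_singleton] at h; subst h; exact le_rfl
  have hadmC₁ : Adm a x₁ (C ++ [x₁]) := by
    refine adm_of_sorted_mem hC₁s ?_ (by simp) ?_
    · exact hmemC₁ a (mem_mergeL.2 (Or.inl hτ.mem_head)) ha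
    · intro y hy
      have hyτ : y ∈ τ'' := by
        rw [hCD]
        rcases List.mem_append.1 hy with h | h
        · exact List.mem_append.2 (Or.inl h)
        · simp only [List.mem_singleton] at h; subst h
          exact List.mem_append.2 (Or.inr (List.mem_cons_self))
      refine ⟨(hbτ'' y hyτ).1, ?_⟩
      rcases List.mem_append.1 hy with h | h
      · exact (hClt y h).le
      · simp only [List.mem_singleton] at h; subst h; exact le_rfl
  -- the four-block decomposition
  have hsplit : gsum f σ'' τ'' =
      gsum f (A ++ [s₁]) (C ++ [x₁]) + gsum f (A ++ [s₁]) (x₁ :: D)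
        + (gsum f (s₁ :: B) (C ++ [x₁]) + gsum f (s₁ :: B) (x₁ :: D)) := by
    rw [hAB, hCD, gsum_split_left f A s₁ B (C ++ x₁ :: D),
      gsum_split_right f (A ++ [s₁]) C x₁ D, gsum_split_right f (s₁ :: B) C x₁ D]
  -- inequality (1)
  have h1 : gsum f σ τ ≤ gsum f (A ++ [s₁]) (C ++ [x₁]) + gsum f (s₁ :: B) (C ++ [x₁]) := by
    rw [← gsum_split_left, ← hAB]
    refine gsum_mono_subset f hσ.1 hσ''s hτ.1 hC₁s (fun y hy => mem_mergeL.2 (Or.inl hy)) ?_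
    intro y hy
    exact hmemC₁ y (mem_mergeL.2 (Or.inl hy)) (hτ.le_of_mem hy).2
  -- inequality (2)
  have h2 : gsum f σ' τ' ≤ gsum f (A ++ [s₁]) (C ++ [x₁]) + gsum f (A ++ [s₁]) (x₁ :: D) := by
    rw [← gsum_split_right, ← hCD]
    refine gsum_mono_subset f hσ'.1 hA₁s hτ'.1 hτ''s ?_ (fun y hy => mem_mergeL.2 (Or.inr hy))
    intro y hy
    exact hmemA₁ y (mem_mergeL.2 (Or.inr hy)) (hσ'.le_of_mem hy).2
  -- inequality (3)
  have h3 : ENNReal.ofReal |mixedInc f s₁ s₂ x₁ x₂| ≤ gsum f (s₁ :: B) (x₁ :: D) := by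
    rw [← gsum_pair f s₁ s₂ x₁ x₂]
    refine gsum_mono_subset f ?_ hB₁s ?_ hD₁s ?_ ?_
    · simp [List.pairwise_cons, hs]
    · simp [List.pairwise_cons, hx]
    · intro y hy
      rcases List.mem_cons.1 hy with rfl | hy
      · exact List.mem_cons_self
      · simp only [List.mem_singleton] at hy; subst hy; exact hs₂B₁
    · intro y hy
      rcases List.mem_cons.1 hy with rfl | hy
      · exact List.mem_cons_self
      · simp only [List.mem_singleton] at hy; subst hy; exact hx₂D₁
  -- put everything together
  have h4 : gsum f (A ++ [s₁]) (C ++ [x₁]) ≤ var2 f t s₁ a x₁ := gsum_le_var2 f hadmA₁ hadmC₁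
  have h5 : gsum f σ'' τ'' ≤ var2 f t s₂ a x₂ := gsum_le_var2 f hadmσ'' hadmτ''
  calc gsum f σ τ + gsum f σ' τ' + ENNReal.ofReal |mixedInc f s₁ s₂ x₁ x₂|
      ≤ (gsum f (A ++ [s₁]) (C ++ [x₁]) + gsum f (s₁ :: B) (C ++ [x₁]))
        + (gsum f (A ++ [s₁]) (C ++ [x₁]) + gsum f (A ++ [s₁]) (x₁ :: D))
        + gsum f (s₁ :: B) (x₁ :: D) := add_le_add (add_le_add h1 h2) h3
    _ = gsum f σ'' τ'' + gsum f (A ++ [s₁]) (C ++ [x₁]) := by rw [hsplit]; ring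
    _ ≤ var2 f t s₂ a x₂ + var2 f t s₁ a x₁ := add_le_add h5 h4

lemma iSup_add_iSup_add_le {ι κ : Sort _} [Nonempty ι] [Nonempty κ] (f : ι → ENNReal)
    (g : κ → ENNReal) (c D : ENNReal) (h : ∀ i j, f i + g j + c ≤ D) :
    (⨆ i, f i) + (⨆ j, g j) + c ≤ D := by
  rw [ENNReal.iSup_add (f := f), ENNReal.iSup_add (f := fun i => f i + ⨆ j, g j)]
  refine iSup_le fun i => ?_
  rw [ENNReal.add_iSup (f := g), ENNReal.iSup_add (f := fun j => f i + g j)]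
  exact iSup_le fun j => h i j

lemma var2_superadd (f : ℝ → ℝ → ℝ) {t a s₁ s₂ x₁ x₂ : ℝ} (ht : t ≤ s₁) (hs : s₁ ≤ s₂)
    (ha : a ≤ x₁) (hx : x₁ ≤ x₂) :
    var2 f t s₂ a x₁ + var2 f t s₁ a x₂ + ENNReal.ofReal |mixedInc f s₁ s₂ x₁ x₂|
      ≤ var2 f t s₂ a x₂ + var2 f t s₁ a x₁ := by
  rcases eq_or_lt_of_le hs with rfl | hs'
  · have h0 : mixedInc f s₁ s₁ x₁ x₂ = 0 := by unfold mixedInc; ring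
    rw [h0]
    simp only [abs_zero, ENNReal.ofReal_zero, add_zero]
    exact (add_comm _ _).le
  rcases eq_or_lt_of_le hx with rfl | hx'
  · have h0 : mixedInc f s₁ s₂ x₁ x₁ = 0 := by unfold mixedInc; ring
    rw [h0]
    simp only [abs_zero, ENNReal.ofReal_zero, add_zero]
    exact le_rfl
  haveI n1 : Nonempty {p : List ℝ × List ℝ // Adm t s₂ p.1 ∧ Adm a x₁ p.2} := by
    obtain ⟨l1, h1⟩ := adm_exists (ht.trans hs)
    obtain ⟨l2, h2⟩ := adm_exists ha
    exact ⟨⟨(l1, l2), h1, h2⟩⟩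
  haveI n2 : Nonempty {p : List ℝ × List ℝ // Adm t s₁ p.1 ∧ Adm a x₂ p.2} := by
    obtain ⟨l1, h1⟩ := adm_exists ht
    obtain ⟨l2, h2⟩ := adm_exists (ha.trans hx)
    exact ⟨⟨(l1, l2), h1, h2⟩⟩
  rw [var2_eq_iSup f t s₂ a x₁, var2_eq_iSup f t s₁ a x₂]
  exact iSup_add_iSup_add_le _ _ _ _
    (fun p q => gsum_superadd_key f ht hs' ha hx' p.2.1 p.2.2 q.2.1 q.2.2)

end JD

namespace JD

/-- Real-valued variation. -/
noncomputable def Vr (f : ℝ → ℝ → ℝ) (t a s x : ℝ) : ℝ := (var2 f t s a x).toReal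

/-- The left-limit regularization of `Vr`. -/
noncomputable def Lf (f : ℝ → ℝ → ℝ) (t a s x : ℝ) : ℝ :=
  sSup ((fun p : ℝ × ℝ => Vr f t a p.1 p.2) '' (Ico t s ×ˢ Ico a x))

variable {f : ℝ → ℝ → ℝ} {t a : ℝ}

lemma Vr_nonneg (s x : ℝ) : 0 ≤ Vr f t a s x := ENNReal.toReal_nonneg

lemma Vr_mono (hbv : ∀ s x, t ≤ s → a ≤ x → var2 f t s a x ≠ ⊤)
    {s₁ s₂ x₁ x₂ : ℝ} (ht : t ≤ s₁) (hs : s₁ ≤ s₂) (ha : a ≤ x₁) (hx : x₁ ≤ x₂) :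
    Vr f t a s₁ x₁ ≤ Vr f t a s₂ x₂ :=
  (ENNReal.toReal_le_toReal (hbv s₁ x₁ ht ha) (hbv s₂ x₂ (ht.trans hs) (ha.trans hx))).2
    (var2_mono f hs hx)

lemma Vr_super (hbv : ∀ s x, t ≤ s → a ≤ x → var2 f t s a x ≠ ⊤)
    {s₁ s₂ x₁ x₂ : ℝ} (ht : t ≤ s₁) (hs : s₁ ≤ s₂) (ha : a ≤ x₁) (hx : x₁ ≤ x₂) :
    Vr f t a s₂ x₁ + Vr f t a s₁ x₂ + |mixedInc f s₁ s₂ x₁ x₂|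
      ≤ Vr f t a s₂ x₂ + Vr f t a s₁ x₁ := by
  have H := var2_superadd f ht hs ha hx
  have h21 : var2 f t s₂ a x₁ ≠ ⊤ := hbv s₂ x₁ (ht.trans hs) ha
  have h12 : var2 f t s₁ a x₂ ≠ ⊤ := hbv s₁ x₂ ht (ha.trans hx)
  have h22 : var2 f t s₂ a x₂ ≠ ⊤ := hbv s₂ x₂ (ht.trans hs) (ha.trans hx)
  have h11 : var2 f t s₁ a x₁ ≠ ⊤ := hbv s₁ x₁ ht ha
  have := ENNReal.toReal_mono (by finiteness) H
  rw [ENNReal.toReal_add (by finiteness) (by finiteness),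
    ENNReal.toReal_add h21 h12, ENNReal.toReal_add h22 h11,
    ENNReal.toReal_ofReal (abs_nonneg _)] at this
  exact this

lemma Lf_bddAbove (hbv : ∀ s x, t ≤ s → a ≤ x → var2 f t s a x ≠ ⊤) (s x : ℝ) :
    BddAbove ((fun p : ℝ × ℝ => Vr f t a p.1 p.2) '' (Ico t s ×ˢ Ico a x)) := by
  rcases le_or_gt s t with h | hts
  · rw [Set.Ico_eq_empty (not_lt.2 h), Set.empty_prod, Set.image_empty]
    exact bddAbove_empty
  rcases le_or_gt x a with h | hax
  · rw [Set.Ico_eq_empty (not_lt.2 h), Set.prod_empty, Set.image_empty]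
    exact bddAbove_empty
  refine ⟨Vr f t a s x, ?_⟩
  rintro y ⟨⟨s', x'⟩, ⟨⟨h1, h2⟩, h3, h4⟩, rfl⟩
  exact Vr_mono hbv h1 h2.le h3 h4.le

lemma Lf_eq_zero_of {s x : ℝ} (h : s ≤ t ∨ x ≤ a) : Lf f t a s x = 0 := by
  unfold Lf
  rcases h with h | h
  · rw [Set.Ico_eq_empty (not_lt.2 h), Set.empty_prod, Set.image_empty, Real.sSup_empty]
  · rw [Set.Ico_eq_empty (not_lt.2 h), Set.prod_empty, Set.image_empty, Real.sSup_empty]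

lemma Lf_nonneg (hbv : ∀ s x, t ≤ s → a ≤ x → var2 f t s a x ≠ ⊤)
    {s x : ℝ} (hts : t < s) (hax : a < x) : 0 ≤ Lf f t a s x := by
  refine le_trans (Vr_nonneg (f := f) (t := t) (a := a) t a) (le_csSup (Lf_bddAbove hbv s x) ?_)
  exact ⟨(t, a), ⟨⟨le_rfl, hts⟩, le_rfl, hax⟩, rfl⟩

lemma Lf_mono (hbv : ∀ s x, t ≤ s → a ≤ x → var2 f t s a x ≠ ⊤)
    {s₁ s₂ x₁ x₂ : ℝ} (hs : s₁ ≤ s₂) (hx : x₁ ≤ x₂) :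
    Lf f t a s₁ x₁ ≤ Lf f t a s₂ x₂ := by
  by_cases h1 : t < s₁ ∧ a < x₁
  · refine csSup_le_csSup (Lf_bddAbove hbv s₂ x₂) ?_ ?_
    · exact ⟨_, ⟨(t, a), ⟨⟨le_rfl, h1.1⟩, le_rfl, h1.2⟩, rfl⟩⟩
    · refine Set.image_mono ?_
      exact Set.prod_mono (Set.Ico_subset_Ico le_rfl hs) (Set.Ico_subset_Ico le_rfl hx)
  · have hz : Lf f t a s₁ x₁ = 0 := by
      rcases not_and_or.1 h1 with h | h
      · exact Lf_eq_zero_of (Or.inl (not_lt.1 h))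
      · exact Lf_eq_zero_of (Or.inr (not_lt.1 h))
    rw [hz]
    by_cases h2 : t < s₂ ∧ a < x₂
    · exact Lf_nonneg hbv h2.1 h2.2
    · rcases not_and_or.1 h2 with h | h
      · rw [Lf_eq_zero_of (Or.inl (not_lt.1 h))]
      · rw [Lf_eq_zero_of (Or.inr (not_lt.1 h))]

/-- Convergence of `Vr` to `Lf` along monotone approach strictly from below. -/
lemma tendsto_Vr (hbv : ∀ s x, t ≤ s → a ≤ x → var2 f t s a x ≠ ⊤)
    {s x : ℝ} (hts : t < s) (hax : a < x)
    {u v : ℕ → ℝ} (hu : Monotone u) (hv : Monotone v)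
    (hub : ∀ k, t ≤ u k ∧ u k < s) (hvb : ∀ k, a ≤ v k ∧ v k < x)
    (hus : Tendsto u atTop (𝓝 s)) (hvx : Tendsto v atTop (𝓝 x)) :
    Tendsto (fun k => Vr f t a (u k) (v k)) atTop (𝓝 (Lf f t a s x)) := by
  have hmono : Monotone (fun k => Vr f t a (u k) (v k)) := fun k l hkl =>
    Vr_mono hbv (hub k).1 (hu hkl) (hvb k).1 (hv hkl)
  have hbdd : BddAbove (Set.range fun k => Vr f t a (u k) (v k)) := by
    refine ⟨Vr f t a s x, ?_⟩
    rintro y ⟨k, rfl⟩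
    exact Vr_mono hbv (hub k).1 (hub k).2.le (hvb k).1 (hvb k).2.le
  have T := tendsto_atTop_ciSup hmono hbdd
  have heq : (⨆ k, Vr f t a (u k) (v k)) = Lf f t a s x := by
    apply le_antisymm
    · refine ciSup_le fun k => le_csSup (Lf_bddAbove hbv s x) ?_
      exact ⟨(u k, v k), ⟨⟨(hub k).1, (hub k).2⟩, (hvb k).1, (hvb k).2⟩, rfl⟩
    · refine csSup_le ⟨_, ⟨(t, a), ⟨⟨le_rfl, hts⟩, le_rfl, hax⟩, rfl⟩⟩ ?_
      rintro y ⟨⟨s', x'⟩, ⟨⟨h1, h2⟩, h3, h4⟩, rfl⟩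
      obtain ⟨k₁, hk₁⟩ := (hus.eventually (eventually_gt_nhds h2)).exists
      obtain ⟨k₂, hk₂⟩ := (hvx.eventually (eventually_gt_nhds h4)).exists
      have h5 : s' ≤ u (max k₁ k₂) := le_trans hk₁.le (hu (le_max_left _ _))
      have h6 : x' ≤ v (max k₁ k₂) := le_trans hk₂.le (hv (le_max_right _ _))
      calc Vr f t a s' x' ≤ Vr f t a (u (max k₁ k₂)) (v (max k₁ k₂)) :=
            Vr_mono hbv h1 h5 h3 h6
        _ ≤ ⨆ k, Vr f t a (u k) (v k) := le_ciSup hbdd _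
  rwa [heq] at T

/-- Left continuity of `Lf`. -/
lemma tendsto_Lf (hbv : ∀ s x, t ≤ s → a ≤ x → var2 f t s a x ≠ ⊤)
    {s x : ℝ} (hts : t < s) (hax : a < x)
    {u v : ℕ → ℝ} (hu : Monotone u) (hv : Monotone v)
    (hub : ∀ k, u k ≤ s) (hvb : ∀ k, v k ≤ x)
    (hus : Tendsto u atTop (𝓝 s)) (hvx : Tendsto v atTop (𝓝 x)) :
    Tendsto (fun k => Lf f t a (u k) (v k)) atTop (𝓝 (Lf f t a s x)) := by
  have hmono : Monotone (fun k => Lf f t a (u k) (v k)) := fun k l hkl =>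
    Lf_mono hbv (hu hkl) (hv hkl)
  have hbdd : BddAbove (Set.range fun k => Lf f t a (u k) (v k)) := by
    refine ⟨Lf f t a s x, ?_⟩
    rintro y ⟨k, rfl⟩
    exact Lf_mono hbv (hub k) (hvb k)
  have T := tendsto_atTop_ciSup hmono hbdd
  have heq : (⨆ k, Lf f t a (u k) (v k)) = Lf f t a s x := by
    apply le_antisymm
    · exact ciSup_le fun k => Lf_mono hbv (hub k) (hvb k)
    · refine csSup_le ⟨_, ⟨(t, a), ⟨⟨le_rfl, hts⟩, le_rfl, hax⟩, rfl⟩⟩ ?_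
      rintro y ⟨⟨s', x'⟩, ⟨⟨h1, h2⟩, h3, h4⟩, rfl⟩
      obtain ⟨k₁, hk₁⟩ := (hus.eventually (eventually_gt_nhds h2)).exists
      obtain ⟨k₂, hk₂⟩ := (hvx.eventually (eventually_gt_nhds h4)).exists
      set k := max k₁ k₂
      have h5 : s' < u k := lt_of_lt_of_le hk₁ (hu (le_max_left _ _))
      have h6 : x' < v k := lt_of_lt_of_le hk₂ (hv (le_max_right _ _))
      calc Vr f t a s' x' ≤ Lf f t a (u k) (v k) :=
            le_csSup (Lf_bddAbove hbv (u k) (v k)) ⟨(s', x'), ⟨⟨h1, h5⟩, h3, h6⟩, rfl⟩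
        _ ≤ ⨆ k, Lf f t a (u k) (v k) := le_ciSup hbdd _
  rwa [heq] at T

end JD

namespace JD

lemma seq_aux (c b : ℝ) (hcb : c < b) :
    ∃ w : ℕ → ℝ, Monotone w ∧ (∀ k, c ≤ w k ∧ w k < b) ∧ Tendsto w atTop (𝓝 b) := by
  refine ⟨fun k => max c (b - 1/(k+1)), ?_, ?_, ?_⟩
  · intro k l hkl
    refine max_le_max le_rfl (sub_le_sub_left ?_ _)
    refine one_div_le_one_div_of_le (by positivity) ?_
    have : (k : ℝ) ≤ l := Nat.cast_le.2 hkl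
    linarith
  · intro k
    exact ⟨le_max_left _ _, max_lt hcb (sub_lt_self _ (by positivity))⟩
  · have h1 : Tendsto (fun k : ℕ => b - 1/(k+1:ℝ)) atTop (𝓝 b) := by
      have h0 := tendsto_one_div_add_atTop_nhds_zero_nat (𝕜 := ℝ)
      simpa using tendsto_const_nhds.sub h0
    have h2 := (tendsto_const_nhds (x := c) (f := atTop)).max h1
    rwa [max_eq_right hcb.le] at h2

lemma mixedLf_ge {f : ℝ → ℝ → ℝ} {t a : ℝ}
    (hbv : ∀ s x, t ≤ s → a ≤ x → var2 f t s a x ≠ ⊤)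
    (hlc : ∀ s x, t ≤ s → a ≤ x → LeftCont2At f s x)
    {s₁ s₂ x₁ x₂ : ℝ} (ht : t < s₁) (hs : s₁ < s₂) (ha : a < x₁) (hx : x₁ < x₂) :
    |mixedInc f s₁ s₂ x₁ x₂| ≤
      Lf f t a s₂ x₂ - Lf f t a s₂ x₁ - Lf f t a s₁ x₂ + Lf f t a s₁ x₁ := by
  obtain ⟨u1, hu1m, hu1b, hu1t⟩ := seq_aux t s₁ ht
  obtain ⟨u2, hu2m, hu2b, hu2t⟩ := seq_aux s₁ s₂ hs
  obtain ⟨v1, hv1m, hv1b, hv1t⟩ := seq_aux a x₁ ha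
  obtain ⟨v2, hv2m, hv2b, hv2t⟩ := seq_aux x₁ x₂ hx
  have hu2b' : ∀ k, t ≤ u2 k ∧ u2 k < s₂ := fun k => ⟨ht.le.trans (hu2b k).1, (hu2b k).2⟩
  have hv2b' : ∀ k, a ≤ v2 k ∧ v2 k < x₂ := fun k => ⟨ha.le.trans (hv2b k).1, (hv2b k).2⟩
  have hle : ∀ k, u1 k ≤ u2 k := fun k => (hu1b k).2.le.trans (hu2b k).1
  have hle' : ∀ k, v1 k ≤ v2 k := fun k => (hv1b k).2.le.trans (hv2b k).1
  have key : ∀ k, Vr f t a (u2 k) (v1 k) + Vr f t a (u1 k) (v2 k)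
      + |mixedInc f (u1 k) (u2 k) (v1 k) (v2 k)|
      ≤ Vr f t a (u2 k) (v2 k) + Vr f t a (u1 k) (v1 k) := fun k =>
    Vr_super hbv (hu1b k).1 (hle k) (hv1b k).1 (hle' k)
  have T21 := tendsto_Vr hbv (ht.trans hs) ha hu2m hv1m hu2b' hv1b hu2t hv1t
  have T12 := tendsto_Vr hbv ht (ha.trans hx) hu1m hv2m hu1b hv2b' hu1t hv2t
  have T22 := tendsto_Vr hbv (ht.trans hs) (ha.trans hx) hu2m hv2m hu2b' hv2b' hu2t hv2t
  have T11 := tendsto_Vr hbv ht ha hu1m hv1m hu1b hv1b hu1t hv1t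
  have F22 : Tendsto (fun k => f (u2 k) (v2 k)) atTop (𝓝 (f s₂ x₂)) :=
    hlc s₂ x₂ (ht.le.trans hs.le) (ha.le.trans hx.le) u2 v2 hu2m hv2m
      (fun k => (hu2b k).2.le) (fun k => (hv2b k).2.le) hu2t hv2t
  have F21 : Tendsto (fun k => f (u2 k) (v1 k)) atTop (𝓝 (f s₂ x₁)) :=
    hlc s₂ x₁ (ht.le.trans hs.le) ha.le u2 v1 hu2m hv1m
      (fun k => (hu2b k).2.le) (fun k => (hv1b k).2.le) hu2t hv1t
  have F12 : Tendsto (fun k => f (u1 k) (v2 k)) atTop (𝓝 (f s₁ x₂)) :=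
    hlc s₁ x₂ ht.le (ha.le.trans hx.le) u1 v2 hu1m hv2m
      (fun k => (hu1b k).2.le) (fun k => (hv2b k).2.le) hu1t hv2t
  have F11 : Tendsto (fun k => f (u1 k) (v1 k)) atTop (𝓝 (f s₁ x₁)) :=
    hlc s₁ x₁ ht.le ha.le u1 v1 hu1m hv1m
      (fun k => (hu1b k).2.le) (fun k => (hv1b k).2.le) hu1t hv1t
  have Fm : Tendsto (fun k => |mixedInc f (u1 k) (u2 k) (v1 k) (v2 k)|) atTop
      (𝓝 |mixedInc f s₁ s₂ x₁ x₂|) := by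
    have hm : Tendsto (fun k => mixedInc f (u1 k) (u2 k) (v1 k) (v2 k)) atTop
        (𝓝 (mixedInc f s₁ s₂ x₁ x₂)) := by
      simp only [mixedInc]
      exact ((F22.sub F21).sub F12).add F11
    exact hm.abs
  have H := le_of_tendsto_of_tendsto' ((T21.add T12).add Fm) (T22.add T11) key
  linarith

end JD

/-- Left-continuous Jordan decomposition (Proposition 2 of the paper): taking left limits of
`f̃₁ = (V_f + f)/2` and `f̃₂ = (V_f − f)/2` yields two-dimensionally monotonically increasing,
left continuous functions `f₁, f₂` with `f = f₁ − f₂` on the interior of the quarter space. -/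
theorem jordan_decomposition_left_continuous (f : ℝ → ℝ → ℝ) (t a : ℝ)
    (hbv : ∀ s x, t ≤ s → a ≤ x → var2 f t s a x ≠ ⊤)
    (hlc : ∀ s x, t ≤ s → a ≤ x → LeftCont2At f s x) :
    ∃ f₁ f₂ : ℝ → ℝ → ℝ,
      -- f₁, f₂ are the left limits of f̃₁, f̃₂ along monotone approach from strictly below
      (∀ s x, t < s → a < x →
        ∀ u v : ℕ → ℝ, Monotone u → Monotone v →
          (∀ k, t ≤ u k ∧ u k < s) → (∀ k, a ≤ v k ∧ v k < x) →
          Tendsto u atTop (𝓝 s) → Tendsto v atTop (𝓝 x) →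
          Tendsto (fun k =>
              ((var2 f t (u k) a (v k)).toReal + f (u k) (v k)) / 2) atTop (𝓝 (f₁ s x)) ∧
          Tendsto (fun k =>
              ((var2 f t (u k) a (v k)).toReal - f (u k) (v k)) / 2) atTop (𝓝 (f₂ s x))) ∧
      -- f₁, f₂ are monotonically increasing in the two-dimensional sense
      (∀ s₁ s₂ x₁ x₂ : ℝ, t < s₁ → s₁ ≤ s₂ → a < x₁ → x₁ ≤ x₂ →
          0 ≤ mixedInc f₁ s₁ s₂ x₁ x₂ ∧ 0 ≤ mixedInc f₂ s₁ s₂ x₁ x₂) ∧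
      -- f₁, f₂ are left continuous
      (∀ s x, t < s → a < x → LeftCont2At f₁ s x ∧ LeftCont2At f₂ s x) ∧
      -- decomposition on the interior of the quarter space
      (∀ s x, t < s → a < x → f s x = f₁ s x - f₂ s x) := by
  classical
  refine ⟨fun s x => (JD.Lf f t a s x + f s x) / 2,
    fun s x => (JD.Lf f t a s x - f s x) / 2, ?_, ?_, ?_, ?_⟩
  · intro s x hts hax u v hu hv hub hvb hus hvx
    have hV := JD.tendsto_Vr hbv hts hax hu hv hub hvb hus hvx
    have hf := hlc s x hts.le hax.le u v hu hv (fun k => (hub k).2.le)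
      (fun k => (hvb k).2.le) hus hvx
    exact ⟨(hV.add hf).div_const 2, (hV.sub hf).div_const 2⟩
  · intro s₁ s₂ x₁ x₂ ht1 hs hx1 hx
    rcases eq_or_lt_of_le hs with rfl | hs'
    · constructor <;> { refine le_of_eq ?_; simp only [mixedInc]; ring }
    rcases eq_or_lt_of_le hx with rfl | hx'
    · constructor <;> { refine le_of_eq ?_; simp only [mixedInc]; ring }
    have key := JD.mixedLf_ge hbv hlc ht1 hs' hx1 hx'
    have habs1 : -(mixedInc f s₁ s₂ x₁ x₂) ≤ |mixedInc f s₁ s₂ x₁ x₂| := neg_le_abs _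
    have habs2 : mixedInc f s₁ s₂ x₁ x₂ ≤ |mixedInc f s₁ s₂ x₁ x₂| := le_abs_self _
    constructor
    · have e : mixedInc (fun s x => (JD.Lf f t a s x + f s x) / 2) s₁ s₂ x₁ x₂
          = ((JD.Lf f t a s₂ x₂ - JD.Lf f t a s₂ x₁ - JD.Lf f t a s₁ x₂ + JD.Lf f t a s₁ x₁)
            + mixedInc f s₁ s₂ x₁ x₂) / 2 := by
        simp only [mixedInc]; ring
      rw [e]; linarith
    · have e : mixedInc (fun s x => (JD.Lf f t a s x - f s x) / 2) s₁ s₂ x₁ x₂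
          = ((JD.Lf f t a s₂ x₂ - JD.Lf f t a s₂ x₁ - JD.Lf f t a s₁ x₂ + JD.Lf f t a s₁ x₁)
            - mixedInc f s₁ s₂ x₁ x₂) / 2 := by
        simp only [mixedInc]; ring
      rw [e]; linarith
  · intro s x hts hax
    constructor
    · intro u v hu hv hub hvb hus hvx
      have hL := JD.tendsto_Lf hbv hts hax hu hv hub hvb hus hvx
      have hf := hlc s x hts.le hax.le u v hu hv hub hvb hus hvx
      exact (hL.add hf).div_const 2
    · intro u v hu hv hub hvb hus hvx
      have hL := JD.tendsto_Lf hbv hts hax hu hv hub hvb hus hvx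
      have hf := hlc s x hts.le hax.le u v hu hv hub hvb hus hvx
      exact (hL.sub hf).div_const 2
  · intro s x _ _; ring
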